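/- arXiv:0801.3431 — 2 statements merged into one kernel-verified Lean document; each statement's English description precedes it below -/
import Mathlib

section
/- Let f and g be functions that are positive on (0, ∞) and integrable on every interval [0, r], and suppose that the ratio f/g is monotone nondecreasing on (0, ∞). Then the function r ↦ (∫₀^r f(s) ds) / (∫₀^r g(s) ds) is monotone nondecreasing on (0, ∞). -/
open MeasureTheory intervalIntegral

/-- Lemma 1.3 (Gromov): if `f` and `g` are positive on `(0, ∞)`, integrable on every
interval `[0, r]`, and the ratio `f / g` is monotone nondecreasing on `(0, ∞)`,
then `r ↦ (∫₀^r f) / (∫₀^r g)` is monotone nondecreasing on `(0, ∞)`. -/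
theorem integral_ratio_monotone
    (f g : ℝ → ℝ)
    (hf_pos : ∀ s : ℝ, 0 < s → 0 < f s)
    (hg_pos : ∀ s : ℝ, 0 < s → 0 < g s)
    (hf_int : ∀ r : ℝ, 0 < r → MeasureTheory.IntegrableOn f (Set.Icc 0 r))
    (hg_int : ∀ r : ℝ, 0 < r → MeasureTheory.IntegrableOn g (Set.Icc 0 r))
    (hratio : ∀ s t : ℝ, 0 < s → s ≤ t → f s / g s ≤ f t / g t) :
    ∀ r₁ r₂ : ℝ, 0 < r₁ → r₁ ≤ r₂ →
      (∫ s in (0:ℝ)..r₁, f s) / (∫ s in (0:ℝ)..r₁, g s)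
        ≤ (∫ s in (0:ℝ)..r₂, f s) / (∫ s in (0:ℝ)..r₂, g s) := by
  intro r₁ r₂ hr₁ hle
  rcases eq_or_lt_of_le hle with rfl | hlt
  · exact le_refl _
  have hr₂ : 0 < r₂ := hr₁.trans hlt
  -- interval integrability
  have hfI : ∀ a b : ℝ, 0 ≤ a → 0 < b → IntervalIntegrable f volume a b := by
    intro a b ha hb
    rw [intervalIntegrable_iff]
    exact (hf_int (max a b) (lt_max_of_lt_right hb)).mono_set
      (Set.uIoc_subset_uIcc.trans (Set.uIcc_subset_Icc ⟨ha, le_max_left a b⟩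
        ⟨hb.le, le_max_right a b⟩) |>.trans (by norm_num))
  have hgI : ∀ a b : ℝ, 0 ≤ a → 0 < b → IntervalIntegrable g volume a b := by
    intro a b ha hb
    rw [intervalIntegrable_iff]
    exact (hg_int (max a b) (lt_max_of_lt_right hb)).mono_set
      (Set.uIoc_subset_uIcc.trans (Set.uIcc_subset_Icc ⟨ha, le_max_left a b⟩
        ⟨hb.le, le_max_right a b⟩) |>.trans (by norm_num))
  set F₁ := ∫ s in (0:ℝ)..r₁, f s with hF₁
  set G₁ := ∫ s in (0:ℝ)..r₁, g s with hG₁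
  have hG₁pos : 0 < G₁ := intervalIntegral_pos_of_pos_on (hgI 0 r₁ le_rfl hr₁)
    (fun x hx => hg_pos x hx.1) hr₁
  have hF₁pos : 0 < F₁ := intervalIntegral_pos_of_pos_on (hfI 0 r₁ le_rfl hr₁)
    (fun x hx => hf_pos x hx.1) hr₁
  have hG₂pos : 0 < (∫ s in (0:ℝ)..r₂, g s) := intervalIntegral_pos_of_pos_on
    (hgI 0 r₂ le_rfl hr₂) (fun x hx => hg_pos x hx.1) hr₂
  set c := f r₁ / g r₁ with hc
  -- F₁ ≤ c * G₁
  have h1 : F₁ ≤ c * G₁ := by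
    have : F₁ ≤ ∫ s in (0:ℝ)..r₁, c * g s := by
      apply integral_mono_ae_restrict hr₁.le (hfI 0 r₁ le_rfl hr₁)
        ((hgI 0 r₁ le_rfl hr₁).const_mul c)
      have hsub : {x : ℝ | ¬ f x ≤ c * g x} ∩ Set.Icc 0 r₁ ⊆ {0} := by
        intro x ⟨hx, hx0, hxr⟩
        by_contra h0
        have hx0' : 0 < x := lt_of_le_of_ne hx0 (Ne.symm h0)
        exact hx (by
          have := hratio x r₁ hx0' hxr
          have hgx := hg_pos x hx0'
          calc f x = (f x / g x) * g x := by field_simp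
            _ ≤ c * g x := by apply mul_le_mul_of_nonneg_right this hgx.le)
      rw [Filter.EventuallyLE, ae_restrict_iff' measurableSet_Icc]
      rw [MeasureTheory.ae_iff]
      refine measure_mono_null ?_ (measure_singleton (0:ℝ))
      intro x hx
      rw [Set.mem_setOf_eq, Classical.not_imp] at hx
      exact hsub ⟨hx.2, hx.1⟩
    calc F₁ ≤ ∫ s in (0:ℝ)..r₁, c * g s := this
      _ = c * G₁ := by rw [intervalIntegral.integral_const_mul]
  -- c * ∫_{r₁}^{r₂} g ≤ ∫_{r₁}^{r₂} f
  have h2 : c * (∫ s in r₁..r₂, g s) ≤ ∫ s in r₁..r₂, f s := by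
    rw [← intervalIntegral.integral_const_mul]
    apply integral_mono_on hlt.le ((hgI r₁ r₂ hr₁.le hr₂).const_mul c)
      (hfI r₁ r₂ hr₁.le hr₂)
    intro x ⟨hx1, _⟩
    have hx0 : 0 < x := hr₁.trans_le hx1
    have := hratio r₁ x hr₁ hx1
    have hgx := hg_pos x hx0
    calc c * g x ≤ (f x / g x) * g x := mul_le_mul_of_nonneg_right this hgx.le
      _ = f x := by field_simp
  have hIg : 0 ≤ ∫ s in r₁..r₂, g s :=
    integral_nonneg hlt.le (fun x hx => (hg_pos x (hr₁.trans_le hx.1)).le)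
  have hsplitf : (∫ s in (0:ℝ)..r₂, f s) = F₁ + ∫ s in r₁..r₂, f s :=
    (integral_add_adjacent_intervals (hfI 0 r₁ le_rfl hr₁) (hfI r₁ r₂ hr₁.le hr₂)).symm
  have hsplitg : (∫ s in (0:ℝ)..r₂, g s) = G₁ + ∫ s in r₁..r₂, g s :=
    (integral_add_adjacent_intervals (hgI 0 r₁ le_rfl hr₁) (hgI r₁ r₂ hr₁.le hr₂)).symm
  rw [div_le_div_iff₀ hG₁pos hG₂pos, hsplitf, hsplitg]
  nlinarith [mul_le_mul_of_nonneg_right h1 hIg, mul_le_mul_of_nonneg_left h2 hG₁pos.le]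
end

section
/- Let k ≥ 2 be an integer, r > 0 a real number, and h : ℝ → ℝ a measurable function that is bounded on [0, r]. Then |∫₀^r (sinh s / sinh r)^{k-1} · h(s) ds| ≤ (1/(k-1)) · sup_{0 ≤ s ≤ r} |h(s)|. -/
/-- Scalar form of the estimates (1.9)–(1.11): for an integer `k ≥ 2`, a real `r > 0`
and a measurable function `h` bounded on `[0, r]`,
`|∫₀^r (sinh s / sinh r)^(k-1) · h(s) ds| ≤ (1/(k-1)) · sup_{0 ≤ s ≤ r} |h s|`. -/
theorem abs_integral_sinh_weight_le (k : ℕ) (hk : 2 ≤ k) (r : ℝ) (hr : 0 < r)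
    (h : ℝ → ℝ) (hmeas : Measurable h)
    (hbdd : ∃ C : ℝ, ∀ s ∈ Set.Icc (0:ℝ) r, |h s| ≤ C) :
    |∫ s in (0:ℝ)..r, (Real.sinh s / Real.sinh r) ^ (k - 1) * h s|
      ≤ (1 / ((k : ℝ) - 1)) * ⨆ s : Set.Icc (0:ℝ) r, |h s| := by
  obtain ⟨C, hC⟩ := hbdd
  set c : ℝ := (k : ℝ) - 1 with hcdef
  have hk2 : (2:ℝ) ≤ (k:ℝ) := by exact_mod_cast hk
  have hc1 : (1:ℝ) ≤ c := by simp [hcdef]; linarith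
  have hc0 : (0:ℝ) < c := lt_of_lt_of_le one_pos hc1
  set M : ℝ := ⨆ s : Set.Icc (0:ℝ) r, |h s| with hMdef
  have hbdd' : BddAbove (Set.range fun s : Set.Icc (0:ℝ) r => |h s|) :=
    ⟨C, by rintro x ⟨s, rfl⟩; exact hC s s.2⟩
  have hMle : ∀ s ∈ Set.Icc (0:ℝ) r, |h s| ≤ M := fun s hs =>
    le_ciSup hbdd' ⟨s, hs⟩
  have hM0 : 0 ≤ M := le_trans (abs_nonneg _) (hMle 0 ⟨le_refl _, hr.le⟩)
  have hsr : 0 < Real.sinh r := Real.sinh_pos_iff.mpr hr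
  have hcast : ((k - 1 : ℕ) : ℝ) = c := by
    rw [Nat.cast_sub (by omega)]; simp [hcdef]
  -- weight bound
  have hw : ∀ s ∈ Set.Icc (0:ℝ) r,
      (Real.sinh s / Real.sinh r) ^ (k - 1) ≤ Real.exp (c * (s - r)) := by
    intro s hs
    have hs0 : 0 ≤ Real.sinh s := Real.sinh_nonneg_iff.mpr hs.1
    have hdiv : Real.sinh s / Real.sinh r ≤ Real.exp (s - r) := by
      rw [div_le_iff₀ hsr]
      have hes : Real.exp s ≤ Real.exp r := Real.exp_le_exp.mpr hs.2
      have hps : 0 < Real.exp s := Real.exp_pos s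
      have hpr : 0 < Real.exp r := Real.exp_pos r
      have h1 : Real.exp s * Real.exp s ≤ Real.exp r * Real.exp r :=
        mul_le_mul hes hes hps.le hpr.le
      have hia : Real.exp s * (Real.exp s)⁻¹ = 1 := mul_inv_cancel₀ hps.ne'
      have hib : Real.exp r * (Real.exp r)⁻¹ = 1 := mul_inv_cancel₀ hpr.ne'
      have key : Real.sinh s * Real.exp r ≤ Real.exp s * Real.sinh r := by
        rw [Real.sinh_eq, Real.sinh_eq, Real.exp_neg, Real.exp_neg]
        nlinarith [inv_pos.mpr hps, inv_pos.mpr hpr, mul_pos hps hpr]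
      rw [Real.exp_sub, div_mul_eq_mul_div, le_div_iff₀ hpr]
      exact key
    calc (Real.sinh s / Real.sinh r) ^ (k - 1)
        ≤ (Real.exp (s - r)) ^ (k - 1) :=
          pow_le_pow_left₀ (div_nonneg hs0 hsr.le) hdiv _
      _ = Real.exp (c * (s - r)) := by
          rw [← Real.exp_nat_mul, hcast]
  have hwpos : ∀ s ∈ Set.Icc (0:ℝ) r,
      0 ≤ (Real.sinh s / Real.sinh r) ^ (k - 1) := by
    intro s hs
    exact pow_nonneg (div_nonneg (Real.sinh_nonneg_iff.mpr hs.1) hsr.le) _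
  -- pointwise bound on |f|
  have hfb : ∀ s ∈ Set.Icc (0:ℝ) r,
      |(Real.sinh s / Real.sinh r) ^ (k - 1) * h s| ≤ M * Real.exp (c * (s - r)) := by
    intro s hs
    rw [abs_mul, abs_of_nonneg (hwpos s hs)]
    calc (Real.sinh s / Real.sinh r) ^ (k - 1) * |h s|
        ≤ Real.exp (c * (s - r)) * M :=
          mul_le_mul (hw s hs) (hMle s hs) (abs_nonneg _) (Real.exp_pos _).le
      _ = M * Real.exp (c * (s - r)) := mul_comm _ _
  -- integrability
  have hfmeas : Measurable fun s => (Real.sinh s / Real.sinh r) ^ (k - 1) * h s :=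
    (((Real.measurable_sinh).div measurable_const).pow_const _).mul hmeas
  have hfint : IntervalIntegrable
      (fun s => (Real.sinh s / Real.sinh r) ^ (k - 1) * h s) MeasureTheory.volume 0 r := by
    rw [intervalIntegrable_iff, Set.uIoc_of_le hr.le]
    apply MeasureTheory.Measure.integrableOn_of_bounded (M := M * Real.exp 0)
      (by simp [Real.volume_Ioc]) hfmeas.aestronglyMeasurable
    filter_upwards [MeasureTheory.ae_restrict_mem measurableSet_Ioc] with s hs
    have hs' : s ∈ Set.Icc (0:ℝ) r := ⟨hs.1.le, hs.2⟩
    rw [Real.norm_eq_abs]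
    refine (hfb s hs').trans ?_
    have : Real.exp (c * (s - r)) ≤ Real.exp 0 :=
      Real.exp_le_exp.mpr (by nlinarith [hs'.1, hs'.2])
    nlinarith
  have hgcont : Continuous fun s => M * Real.exp (c * (s - r)) :=
    continuous_const.mul (Real.continuous_exp.comp
      (continuous_const.mul (continuous_id.sub continuous_const)))
  have hgint : IntervalIntegrable (fun s => M * Real.exp (c * (s - r)))
      MeasureTheory.volume 0 r := hgcont.intervalIntegrable 0 r
  -- exp integral computation
  have hderiv : ∀ s ∈ Set.uIcc (0:ℝ) r,
      HasDerivAt (fun s => Real.exp (c * (s - r)) / c) (Real.exp (c * (s - r))) s := by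
    intro s _
    have h1 : HasDerivAt (fun s : ℝ => c * (s - r)) c s := by
      simpa using ((hasDerivAt_id s).sub_const r).const_mul c
    have h2 := h1.exp
    have h3 := h2.div_const c
    simpa [mul_div_assoc, mul_div_cancel_left₀, hc0.ne'] using h3
  have hexpint : ∫ s in (0:ℝ)..r, Real.exp (c * (s - r)) =
      Real.exp (c * (r - r)) / c - Real.exp (c * (0 - r)) / c := by
    exact intervalIntegral.integral_eq_sub_of_hasDerivAt hderiv
      ((Real.continuous_exp.comp
        (continuous_const.mul (continuous_id.sub continuous_const))).intervalIntegrable 0 r)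
  calc |∫ s in (0:ℝ)..r, (Real.sinh s / Real.sinh r) ^ (k - 1) * h s|
      ≤ ∫ s in (0:ℝ)..r, |(Real.sinh s / Real.sinh r) ^ (k - 1) * h s| :=
        intervalIntegral.abs_integral_le_integral_abs hr.le
    _ ≤ ∫ s in (0:ℝ)..r, M * Real.exp (c * (s - r)) := by
        apply intervalIntegral.integral_mono_on hr.le hfint.abs hgint hfb
    _ = M * (Real.exp (c * (r - r)) / c - Real.exp (c * (0 - r)) / c) := by
        rw [intervalIntegral.integral_const_mul, hexpint]
    _ ≤ (1 / c) * M := by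
        rw [sub_self, mul_zero, Real.exp_zero]
        have h1 : 1 / c - Real.exp (c * (0 - r)) / c ≤ 1 / c :=
          sub_le_self _ (div_nonneg (Real.exp_pos _).le hc0.le)
        calc M * (1 / c - Real.exp (c * (0 - r)) / c)
            ≤ M * (1 / c) := mul_le_mul_of_nonneg_left h1 hM0
          _ = (1 / c) * M := mul_comm _ _
end
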